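/- Consider the 3-dimensional system $u_1' = -u_1 u_2$, $u_2' = u_1 u_2^2(1-u_2)$, $u_3' = -u_3$ restricted to $\{u_3 = 0\}$ and rewritten in the fast time: $u_1' = -u_2$, $u_2' = u_2^2(1-u_2)$. If $0 < u_2(0) < 1$ and $u_1(0) > 0$, then $u_2(0) \leq u_2(t) < 1$ for all $t \geq 0$ in the interval of existence, $u_1(t) \leq u_1(0) - u_2(0)t$, and consequently $u_1$ attains the value $0$ at some finite time $t \leq u_1(0)/u_2(0)$. -/

import Mathlib

/-- Remark 4.3: for `u₁' = -u₂`, `u₂' = u₂²(1-u₂)` with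
`0 < u₂(0) < 1` and `u₁(0) > 0`, we have `u₂(0) ≤ u₂(t) < 1` and
`u₁(t) ≤ u₁(0) - u₂(0) t` for all `t ≥ 0`; consequently `u₁` vanishes at some
finite time `t₀ ≤ u₁(0)/u₂(0)`. -/
theorem remark_slow_counterexample
    (u₁ u₂ : ℝ → ℝ)
    (h10 : 0 < u₁ 0) (h20 : 0 < u₂ 0) (h20' : u₂ 0 < 1)
    (hode₁ : ∀ t ∈ Set.Ici (0:ℝ), HasDerivAt u₁ (-(u₂ t)) t)
    (hode₂ : ∀ t ∈ Set.Ici (0:ℝ), HasDerivAt u₂ ((u₂ t) ^ 2 * (1 - u₂ t)) t) :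
    (∀ t ∈ Set.Ici (0:ℝ), u₂ 0 ≤ u₂ t ∧ u₂ t < 1 ∧ u₁ t ≤ u₁ 0 - u₂ 0 * t) ∧
    ∃ t₀, 0 ≤ t₀ ∧ t₀ ≤ u₁ 0 / u₂ 0 ∧ u₁ t₀ = 0 := by
  have hc2 : ContinuousOn u₂ (Set.Ici 0) := fun t ht =>
    (hode₂ t ht).continuousAt.continuousWithinAt
  have hc1 : ContinuousOn u₁ (Set.Ici 0) := fun t ht =>
    (hode₁ t ht).continuousAt.continuousWithinAt
  -- Key invariance: 0 < u₂ t < 1 for all t ≥ 0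
  have key : ∀ t ∈ Set.Ici (0:ℝ), 0 < u₂ t ∧ u₂ t < 1 := by
    by_contra h
    push_neg at h
    obtain ⟨a, ha, hbad⟩ := h
    set S : Set ℝ := Set.Ici 0 ∩ u₂ ⁻¹' (Set.Iic 0 ∪ Set.Ici 1) with hSdef
    have haS : a ∈ S := by
      refine ⟨ha, ?_⟩
      rcases le_or_gt (u₂ a) 0 with h'|h'
      · exact Or.inl h'
      · exact Or.inr (hbad h')
    have hSclosed : IsClosed S :=
      hc2.preimage_isClosed_of_isClosed isClosed_Ici (isClosed_Iic.union isClosed_Ici)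
    have hbdd : BddBelow S := ⟨0, fun x hx => hx.1⟩
    set T := sInf S with hTdef
    have hTS : T ∈ S := hSclosed.csInf_mem ⟨a, haS⟩ hbdd
    have hT0 : (0:ℝ) ≤ T := hTS.1
    have hlt : ∀ s, 0 ≤ s → s < T → 0 < u₂ s ∧ u₂ s < 1 := by
      intro s hs hsT
      by_contra hcon
      have hsS : s ∈ S := by
        refine ⟨hs, ?_⟩
        rcases le_or_gt (u₂ s) 0 with h'|h'
        · exact Or.inl h'
        · push_neg at hcon
          exact Or.inr (hcon h')
      exact absurd (csInf_le hbdd hsS) (not_le.2 hsT)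
    have hTpos : 0 < T := by
      rcases hT0.lt_or_eq with h'|h'
      · exact h'
      · exfalso
        rcases hTS.2 with h2|h2 <;>
          simp only [Set.mem_Iic, Set.mem_Ici] at h2 <;> rw [← h'] at h2 <;> linarith
    obtain ⟨M, hM⟩ :=
      isCompact_Icc.exists_bound_of_continuousOn (hc2.mono (Set.Icc_subset_Ici_self : Set.Icc (0:ℝ) T ⊆ Set.Ici 0))
    have hM0 : 0 ≤ M := le_trans (norm_nonneg _) (hM 0 ⟨le_refl 0, hT0⟩)
    set C : ℝ := M ^ 2 + M with hCdef
    have hC0 : 0 ≤ C := by positivity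
    have hCM2 : M ^ 2 ≤ C := by simp [hCdef]; linarith
    have hexp : ∀ s : ℝ, HasDerivAt (fun t => Real.exp (C * t)) (Real.exp (C * s) * C) s := by
      intro s
      have : HasDerivAt (fun t : ℝ => C * t) C s := by
        simpa using (hasDerivAt_id s).const_mul C
      exact this.exp
    rcases hTS.2 with h2|h2
    · -- u₂ T ≤ 0 : consider w t = u₂ t * exp (C t)
      set w : ℝ → ℝ := fun t => u₂ t * Real.exp (C * t) with hwdef
      have hw : ∀ s ∈ Set.Ici (0:ℝ),
          HasDerivAt w ((u₂ s ^ 2 * (1 - u₂ s)) * Real.exp (C * s)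
            + u₂ s * (Real.exp (C * s) * C)) s := fun s hs => (hode₂ s hs).mul (hexp s)
      have hmono : MonotoneOn w (Set.Icc 0 T) := by
        apply monotoneOn_of_deriv_nonneg (convex_Icc 0 T)
        · exact ((hc2.mono Set.Icc_subset_Ici_self).mul
            ((Real.continuous_exp.comp (continuous_const.mul continuous_id)).continuousOn))
        · intro s hs
          rw [interior_Icc] at hs
          exact (hw s (Set.mem_Ici.mpr (le_of_lt hs.1))).differentiableAt.differentiableWithinAt
        · intro s hs
          rw [interior_Icc] at hs
          rw [(hw s (Set.mem_Ici.mpr (le_of_lt hs.1))).deriv]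
          have h01 := hlt s hs.1.le hs.2
          have hep : 0 < Real.exp (C * s) := Real.exp_pos _
          have ha1 : 0 ≤ (u₂ s ^ 2 * (1 - u₂ s)) * Real.exp (C * s) :=
            mul_nonneg (mul_nonneg (sq_nonneg _) (by linarith [h01.2])) hep.le
          have ha2 : 0 ≤ u₂ s * (Real.exp (C * s) * C) :=
            mul_nonneg h01.1.le (mul_nonneg hep.le hC0)
          linarith
      have h0T : w 0 ≤ w T := hmono ⟨le_refl 0, hT0⟩ ⟨hT0, le_refl T⟩ hT0
      have hw0 : w 0 = u₂ 0 := by simp [hwdef]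
      have hwT : w T ≤ 0 := by
        simp only [Set.mem_Iic] at h2
        exact mul_nonpos_of_nonpos_of_nonneg h2 (Real.exp_pos _).le
      rw [hw0] at h0T
      linarith
    · -- 1 ≤ u₂ T : consider w t = (1 - u₂ t) * exp (C t)
      set w : ℝ → ℝ := fun t => (1 - u₂ t) * Real.exp (C * t) with hwdef
      have hw : ∀ s ∈ Set.Ici (0:ℝ),
          HasDerivAt w ((-(u₂ s ^ 2 * (1 - u₂ s))) * Real.exp (C * s)
            + (1 - u₂ s) * (Real.exp (C * s) * C)) s := by
        intro s hs
        exact ((hasDerivAt_const s (1:ℝ)).sub (hode₂ s hs)).mul (hexp s) |>.congr_deriv (by simp only [Pi.sub_apply]; ring)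
      have hmono : MonotoneOn w (Set.Icc 0 T) := by
        apply monotoneOn_of_deriv_nonneg (convex_Icc 0 T)
        · exact (((continuous_const.continuousOn).sub (hc2.mono Set.Icc_subset_Ici_self)).mul
            ((Real.continuous_exp.comp (continuous_const.mul continuous_id)).continuousOn))
        · intro s hs
          rw [interior_Icc] at hs
          exact (hw s (Set.mem_Ici.mpr (le_of_lt hs.1))).differentiableAt.differentiableWithinAt
        · intro s hs
          rw [interior_Icc] at hs
          rw [(hw s (Set.mem_Ici.mpr (le_of_lt hs.1))).deriv]
          have h01 := hlt s hs.1.le hs.2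
          have hMs := abs_le.mp (hM s ⟨hs.1.le, hs.2.le⟩)
          have hep : 0 < Real.exp (C * s) := Real.exp_pos _
          have hsq : u₂ s ^ 2 ≤ M ^ 2 := by nlinarith [hMs.1, hMs.2]
          have ha1 : 0 ≤ Real.exp (C * s) * ((1 - u₂ s) * (C - u₂ s ^ 2)) :=
            mul_nonneg hep.le (mul_nonneg (by linarith [h01.2]) (by linarith))
          nlinarith [ha1]
      have h0T : w 0 ≤ w T := hmono ⟨le_refl 0, hT0⟩ ⟨hT0, le_refl T⟩ hT0
      have hw0 : w 0 = 1 - u₂ 0 := by simp [hwdef]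
      have hwT : w T ≤ 0 := by
        simp only [Set.mem_Ici] at h2
        exact mul_nonpos_of_nonpos_of_nonneg (by linarith) (Real.exp_pos _).le
      rw [hw0] at h0T
      linarith
  -- u₂ is monotone on [0, ∞)
  have hmono2 : MonotoneOn u₂ (Set.Ici 0) := by
    apply monotoneOn_of_deriv_nonneg (convex_Ici 0) hc2
    · intro s hs
      rw [interior_Ici] at hs
      exact (hode₂ s (Set.mem_Ici.mpr (le_of_lt hs))).differentiableAt.differentiableWithinAt
    · intro s hs
      rw [interior_Ici] at hs
      rw [(hode₂ s (Set.mem_Ici.mpr (le_of_lt hs))).deriv]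
      have h01 := key s (Set.mem_Ici.mpr (le_of_lt hs))
      nlinarith [h01.1, h01.2]
  -- u₁ bound
  have hbound : ∀ t ∈ Set.Ici (0:ℝ), u₁ t ≤ u₁ 0 - u₂ 0 * t := by
    set g : ℝ → ℝ := fun t => u₁ t + u₂ 0 * t with hgdef
    have hg : ∀ s ∈ Set.Ici (0:ℝ), HasDerivAt g (-(u₂ s) + u₂ 0) s := by
      intro s hs
      have h2 : HasDerivAt (fun t : ℝ => u₂ 0 * t) (u₂ 0) s := by
        simpa using (hasDerivAt_id s).const_mul (u₂ 0)
      exact (hode₁ s hs).add h2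
    have hanti : AntitoneOn g (Set.Ici 0) := by
      apply antitoneOn_of_deriv_nonpos (convex_Ici 0)
      · exact hc1.add (continuous_const.mul continuous_id).continuousOn
      · intro s hs
        rw [interior_Ici] at hs
        exact (hg s (Set.mem_Ici.mpr (le_of_lt hs))).differentiableAt.differentiableWithinAt
      · intro s hs
        rw [interior_Ici] at hs
        rw [(hg s (Set.mem_Ici.mpr (le_of_lt hs))).deriv]
        have := hmono2 (Set.self_mem_Ici) (Set.mem_Ici.mpr (le_of_lt hs)) (le_of_lt hs)
        linarith
    intro t ht
    have := hanti Set.self_mem_Ici ht ht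
    simp only [hgdef, mul_zero, add_zero] at this
    linarith
  refine ⟨fun t ht => ⟨hmono2 Set.self_mem_Ici ht ht, (key t ht).2, hbound t ht⟩, ?_⟩
  -- IVT for u₁
  set T₁ : ℝ := u₁ 0 / u₂ 0 with hT₁def
  have hT₁pos : 0 < T₁ := div_pos h10 h20
  have hu₁T₁ : u₁ T₁ ≤ 0 := by
    have := hbound T₁ hT₁pos.le
    have h' : u₂ 0 * T₁ = u₁ 0 := by
      rw [hT₁def]
      field_simp
    linarith
  have hsub : Set.Icc (0:ℝ) T₁ ⊆ Set.Ici 0 := Set.Icc_subset_Ici_self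
  have hIVT := intermediate_value_Icc' hT₁pos.le (hc1.mono hsub)
  have h0mem : (0:ℝ) ∈ Set.Icc (u₁ T₁) (u₁ 0) := ⟨hu₁T₁, h10.le⟩
  obtain ⟨t₀, ht₀, ht₀'⟩ := hIVT h0mem
  exact ⟨t₀, ht₀.1, ht₀.2, ht₀'⟩
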